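/- Let r ≥ 1 and let W be a ℂ-subspace of R^r with p·P^r ⊆ W ⊆ q⁻¹·P^r for nonzero polynomials p and q. Then the kernel W ∩ R₋^r of the restriction of π₊ to W is finite-dimensional, the image π₊(W) has finite codimension in P^r, and finrank ℂ (W ∩ R₋^r) − finrank ℂ (P^r ⧸ π₊(W)) = finrank ℂ (W ⧸ p·P^r) − r·natDegree p; that is, the index of π₊ restricted to W equals the virtual dimension of W. -/

import Mathlib

open Polynomial

/-- The componentwise embedding `P^r → R^r` of tuples of polynomials into
tuples of rational functions. -/
noncomputable def polyToRat (r : ℕ) :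
    (Fin r → Polynomial ℂ) →ₗ[ℂ] (Fin r → RatFunc ℂ) :=
  LinearMap.pi fun k =>
    (IsScalarTower.toAlgHom ℂ (Polynomial ℂ) (RatFunc ℂ)).toLinearMap ∘ₗ
      LinearMap.proj k

/-- Componentwise multiplication by a fixed rational function `f` on `R^r`. -/
noncomputable def ratScale (r : ℕ) (f : RatFunc ℂ) :
    (Fin r → RatFunc ℂ) →ₗ[ℂ] (Fin r → RatFunc ℂ) :=
  LinearMap.pi fun k => LinearMap.mulLeft ℂ f ∘ₗ LinearMap.proj k

/-- `P^r` regarded as a subspace of `R^r`. -/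
noncomputable def polySubmodule (r : ℕ) : Submodule ℂ (Fin r → RatFunc ℂ) :=
  LinearMap.range (polyToRat r)

/-- The image `f·U` of a subspace `U ⊆ R^r` under componentwise
multiplication by the rational function `f`. -/
noncomputable def scaleSub (r : ℕ) (f : RatFunc ℂ)
    (U : Submodule ℂ (Fin r → RatFunc ℂ)) : Submodule ℂ (Fin r → RatFunc ℂ) :=
  Submodule.map (ratScale r f) U

section Aux

open Module

/- ### Abstract index lemma -/
theorem index_lemma_aux {F M N : Type*} [Field F] [AddCommGroup M] [Module F M]
    [AddCommGroup N] [Module F N] (S : M →ₗ[F] N) (V : Submodule F M)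
    (h1 : V ⊓ LinearMap.ker S = ⊥)
    (h2 : FiniteDimensional F (N ⧸ Submodule.map S V))
    (h3 : FiniteDimensional F (M ⧸ V)) :
    FiniteDimensional F (LinearMap.ker S) ∧
    FiniteDimensional F (N ⧸ LinearMap.range S) ∧
    (finrank F (LinearMap.ker S) : ℤ) - finrank F (N ⧸ LinearMap.range S)
      = (finrank F (M ⧸ V) : ℤ) - finrank F (N ⧸ Submodule.map S V) := by
  set J := Submodule.map S V with hJ
  set I := LinearMap.range S with hI
  have hJI : J ≤ I := LinearMap.map_le_range
  set φ : M →ₗ[F] N ⧸ J := J.mkQ ∘ₗ S with hφ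
  have hrφ : LinearMap.range φ = Submodule.map J.mkQ I := by
    rw [hφ, LinearMap.range_comp]
  have hkφ : LinearMap.ker φ = V ⊔ LinearMap.ker S := by
    ext x
    simp only [hφ, LinearMap.mem_ker, LinearMap.comp_apply, ← LinearMap.mem_ker (f := J.mkQ),
      Submodule.ker_mkQ]
    constructor
    · intro hx
      obtain ⟨v, hv, hvx⟩ := hx
      have hsub : x - v ∈ LinearMap.ker S := by
        simp [LinearMap.mem_ker, map_sub, hvx]
      have : x = v + (x - v) := by abel
      rw [this]
      exact Submodule.add_mem_sup hv hsub
    · intro hx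
      obtain ⟨v, hv, k, hk, rfl⟩ := Submodule.mem_sup.mp hx
      have hk0 : S k = 0 := hk
      refine ⟨v, hv, ?_⟩
      simp [map_add, hk0]
  set ψ : LinearMap.ker S →ₗ[F] M ⧸ V := V.mkQ ∘ₗ (LinearMap.ker S).subtype with hψ
  have hψinj : Function.Injective ψ := by
    rw [← LinearMap.ker_eq_bot, hψ, LinearMap.ker_comp, Submodule.ker_mkQ]
    rw [Submodule.eq_bot_iff]
    rintro ⟨x, hxk⟩ hx
    have : x ∈ V ⊓ LinearMap.ker S := ⟨hx, hxk⟩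
    rw [h1] at this
    exact Subtype.ext this
  have hrψ : LinearMap.range ψ = Submodule.map V.mkQ (LinearMap.ker S) := by
    rw [hψ, LinearMap.range_comp, Submodule.range_subtype]
  have fdker : FiniteDimensional F (LinearMap.ker S) := by
    have := (LinearEquiv.ofInjective ψ hψinj).symm
    exact Module.Finite.equiv this
  have fdNI : FiniteDimensional F (N ⧸ I) := by
    have e4 := Submodule.quotientQuotientEquivQuotient J I hJI
    exact Module.Finite.equiv e4
  refine ⟨fdker, fdNI, ?_⟩
  have hVle : V ≤ LinearMap.ker φ := hkφ ▸ le_sup_left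
  have e1 := φ.quotKerEquivRange
  have fdq : FiniteDimensional F (M ⧸ LinearMap.ker φ) := Module.Finite.equiv e1.symm
  have e3 := Submodule.quotientQuotientEquivQuotient V (LinearMap.ker φ) hVle
  have hmap : Submodule.map V.mkQ (LinearMap.ker φ) = Submodule.map V.mkQ (LinearMap.ker S) := by
    rw [hkφ, Submodule.map_sup]
    have : Submodule.map V.mkQ V = ⊥ := Submodule.mkQ_map_self V
    rw [this, bot_sup_eq]
  have t1 := Submodule.finrank_quotient_add_finrank (Submodule.map V.mkQ (LinearMap.ker φ))
  have t2 := Submodule.finrank_quotient_add_finrank (Submodule.map J.mkQ I)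
  have e4 := Submodule.quotientQuotientEquivQuotient J I hJI
  have r1 : finrank F ((M ⧸ V) ⧸ Submodule.map V.mkQ (LinearMap.ker φ))
      = finrank F (LinearMap.range φ) := by
    rw [e3.finrank_eq, e1.symm.finrank_eq]
  have r2 : finrank F (Submodule.map V.mkQ (LinearMap.ker φ))
      = finrank F (LinearMap.ker S) := by
    rw [hmap, ← hrψ, ← (LinearEquiv.ofInjective ψ hψinj).finrank_eq]
  have r3 : finrank F ((N ⧸ J) ⧸ Submodule.map J.mkQ I) = finrank F (N ⧸ I) := e4.finrank_eq
  have r4 : finrank F (LinearMap.range φ) = finrank F (Submodule.map J.mkQ I) := by rw [hrφ]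
  rw [r1, r2, r4] at t1
  rw [r3] at t2
  omega

/- ### Componentwise polynomial multiplication and its quotient -/
noncomputable def polyScale (r : ℕ) (s : Polynomial ℂ) :
    (Fin r → Polynomial ℂ) →ₗ[ℂ] (Fin r → Polynomial ℂ) :=
  LinearMap.pi fun k => LinearMap.mulLeft ℂ s ∘ₗ LinearMap.proj k

lemma polyScale_apply (r : ℕ) (s : Polynomial ℂ) (g : Fin r → Polynomial ℂ) (k : Fin r) :
    polyScale r s g k = s * g k := rfl

lemma range_polyScale (r : ℕ) (s : Polynomial ℂ) :
    LinearMap.range (polyScale r s)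
      = Submodule.pi Set.univ (fun _ : Fin r =>
          Submodule.restrictScalars ℂ (Ideal.span {s})) := by
  ext g
  simp only [LinearMap.mem_range, Submodule.mem_pi, Set.mem_univ, forall_true_left,
    Submodule.restrictScalars_mem, Ideal.mem_span_singleton]
  constructor
  · rintro ⟨h, rfl⟩ k
    exact ⟨h k, rfl⟩
  · intro hdvd
    choose h hh using fun k => hdvd k
    exact ⟨h, by funext k; rw [polyScale_apply, ← hh k]⟩

lemma quot_polyScale (r : ℕ) (s : Polynomial ℂ) (hs : s ≠ 0) :
    FiniteDimensional ℂ ((Fin r → Polynomial ℂ) ⧸ LinearMap.range (polyScale r s))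
    ∧ finrank ℂ ((Fin r → Polynomial ℂ) ⧸ LinearMap.range (polyScale r s))
      = r * s.natDegree := by
  haveI : FiniteDimensional ℂ (AdjoinRoot s) := (AdjoinRoot.powerBasis hs).finite
  have hfr : finrank ℂ (AdjoinRoot s) = s.natDegree := by
    rw [(AdjoinRoot.powerBasis hs).finrank]; rfl
  let e1 : ((Fin r → Polynomial ℂ) ⧸ LinearMap.range (polyScale r s)) ≃ₗ[ℂ]
      ((Fin r → Polynomial ℂ) ⧸ Submodule.pi Set.univ (fun _ : Fin r =>
          Submodule.restrictScalars ℂ (Ideal.span {s}))) :=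
    Submodule.quotEquivOfEq _ _ (range_polyScale r s)
  let e2 := Submodule.quotientPi (fun _ : Fin r =>
      Submodule.restrictScalars ℂ (Ideal.span {s}))
  let e3 : (Fin r → (Polynomial ℂ ⧸ Submodule.restrictScalars ℂ (Ideal.span {s}))) ≃ₗ[ℂ]
      (Fin r → AdjoinRoot s) :=
    LinearEquiv.piCongrRight (fun _ =>
      Submodule.Quotient.restrictScalarsEquiv ℂ (Ideal.span {s} : Ideal (Polynomial ℂ)))
  let e := e1.trans (e2.trans e3)
  refine ⟨Module.Finite.equiv e.symm, ?_⟩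
  rw [e.finrank_eq]
  rw [finrank_pi_fintype, Finset.sum_const, Finset.card_univ, Fintype.card_fin, hfr, smul_eq_mul]

/- ### basic computation lemmas -/
lemma polyToRat_apply (r : ℕ) (g : Fin r → Polynomial ℂ) (k : Fin r) :
    polyToRat r g k = algebraMap (Polynomial ℂ) (RatFunc ℂ) (g k) := rfl

lemma ratScale_apply (r : ℕ) (f : RatFunc ℂ) (x : Fin r → RatFunc ℂ) (k : Fin r) :
    ratScale r f x k = f * x k := rfl

lemma ratScale_polyToRat (r : ℕ) (s : Polynomial ℂ) (g : Fin r → Polynomial ℂ) :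
    ratScale r (algebraMap (Polynomial ℂ) (RatFunc ℂ) s) (polyToRat r g)
      = polyToRat r (fun k => s * g k) := by
  funext k
  rw [ratScale_apply, polyToRat_apply, polyToRat_apply, map_mul]

lemma polyToRat_injective (r : ℕ) : Function.Injective (polyToRat r) := by
  intro g h hgh
  funext k
  have := congrFun hgh k
  rw [polyToRat_apply, polyToRat_apply] at this
  exact IsFractionRing.injective (Polynomial ℂ) (RatFunc ℂ) this

end Aux

set_option maxHeartbeats 1000000 in
set_option synthInstance.maxHeartbeats 400000 in
/-- let `π₊ : R^r → P^r` be the ℂ-linear map applying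
componentwise the "polynomial part" `f ↦ f₊`, where `f₊` is the polynomial
quotient of the numerator of `f` by its denominator (so that `f − f₊` is
proper).  If `p·P^r ⊆ W ⊆ q⁻¹·P^r` for nonzero polynomials `p, q`, then the
kernel `W ∩ R₋^r` of `π₊` restricted to `W` is finite-dimensional, the image
`π₊(W)` has finite codimension in `P^r`, and the index
`finrank (W ∩ R₋^r) − finrank (P^r ⧸ π₊(W))` equals the virtual dimension
`finrank (W ⧸ p·P^r) − r·deg p` of `W`. -/
theorem index_piPlus_eq_vdim (r : ℕ) (hr : 1 ≤ r)
    (piPlus : (Fin r → RatFunc ℂ) →ₗ[ℂ] (Fin r → Polynomial ℂ))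
    (hpi : ∀ (f : Fin r → RatFunc ℂ) (k : Fin r),
      piPlus f k = (f k).num / (f k).denom)
    (W : Submodule ℂ (Fin r → RatFunc ℂ)) (p q : Polynomial ℂ)
    (hp : p ≠ 0) (hq : q ≠ 0)
    (hpW : scaleSub r (algebraMap (Polynomial ℂ) (RatFunc ℂ) p)
      (polySubmodule r) ≤ W)
    (hWq : W ≤ scaleSub r (algebraMap (Polynomial ℂ) (RatFunc ℂ) q)⁻¹
      (polySubmodule r)) :
    letI pP : Submodule ℂ (Fin r → RatFunc ℂ) :=
      scaleSub r (algebraMap (Polynomial ℂ) (RatFunc ℂ) p) (polySubmodule r)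
    FiniteDimensional ℂ ↥(W ⊓ LinearMap.ker piPlus) ∧
    FiniteDimensional ℂ ((Fin r → Polynomial ℂ) ⧸ Submodule.map piPlus W) ∧
    (Module.finrank ℂ ↥(W ⊓ LinearMap.ker piPlus) : ℤ)
        - Module.finrank ℂ ((Fin r → Polynomial ℂ) ⧸ Submodule.map piPlus W)
      = (Module.finrank ℂ (↥W ⧸ Submodule.comap W.subtype pP) : ℤ)
        - (r : ℤ) * p.natDegree := by
  set pP : Submodule ℂ (Fin r → RatFunc ℂ) :=
    scaleSub r (algebraMap (Polynomial ℂ) (RatFunc ℂ) p) (polySubmodule r) with hpP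
  -- basic computation: piPlus is the identity on (images of) polynomials
  have hpoly : ∀ g : Fin r → Polynomial ℂ, piPlus (polyToRat r g) = g := by
    intro g
    funext k
    rw [hpi, polyToRat_apply, RatFunc.num_algebraMap, RatFunc.denom_algebraMap]
    simp
  set P := Fin r → Polynomial ℂ
  set S : ↥W →ₗ[ℂ] P := piPlus ∘ₗ W.subtype with hS
  set V : Submodule ℂ ↥W := Submodule.comap W.subtype pP with hV
  -- membership description of pP
  have hmem_pP : ∀ x : Fin r → RatFunc ℂ,
      x ∈ pP ↔ ∃ g : Fin r → Polynomial ℂ, polyToRat r (fun k => p * g k) = x := by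
    intro x
    constructor
    · rintro ⟨y, ⟨g, rfl⟩, rfl⟩
      exact ⟨g, (ratScale_polyToRat r p g).symm⟩
    · rintro ⟨g, rfl⟩
      exact ⟨polyToRat r g, ⟨g, rfl⟩, ratScale_polyToRat r p g⟩
  -- the image of pP under piPlus
  have hmapB : Submodule.map piPlus pP = LinearMap.range (polyScale r p) := by
    ext x
    simp only [Submodule.mem_map, LinearMap.mem_range]
    constructor
    · rintro ⟨y, hy, rfl⟩
      obtain ⟨g, rfl⟩ := (hmem_pP y).mp hy
      exact ⟨g, by rw [hpoly]; rfl⟩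
    · rintro ⟨g, rfl⟩
      refine ⟨polyToRat r (fun k => p * g k), (hmem_pP _).mpr ⟨g, rfl⟩, ?_⟩
      rw [hpoly]; rfl
  -- hypothesis (a) : Submodule.map S V
  have hSV : Submodule.map S V = LinearMap.range (polyScale r p) := by
    rw [hS, Submodule.map_comp, hV, Submodule.map_comap_subtype,
      inf_eq_right.mpr hpW, hmapB]
  -- hypothesis (b) : injectivity on V
  have h1 : V ⊓ LinearMap.ker S = ⊥ := by
    rw [Submodule.eq_bot_iff]
    rintro ⟨x, hxW⟩ ⟨hxV, hxK⟩
    have hxp : x ∈ pP := hxV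
    obtain ⟨g, rfl⟩ := (hmem_pP x).mp hxp
    have hS0 : piPlus (polyToRat r (fun k => p * g k)) = 0 := hxK
    rw [hpoly] at hS0
    have hg : ∀ k, g k = 0 := by
      intro k
      have := congrFun hS0 k
      simp only [Pi.zero_apply] at this
      rcases mul_eq_zero.mp this with h | h
      · exact absurd h hp
      · exact h
    have : (fun k => p * g k) = (0 : P) := by funext k; rw [hg k, mul_zero]; rfl
    apply Subtype.ext
    show polyToRat r (fun k => p * g k) = 0
    rw [this, map_zero]
  -- hypothesis (c)
  have h2 : FiniteDimensional ℂ (P ⧸ Submodule.map S V) := by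
    rw [hSV]; exact (quot_polyScale r p hp).1
  -- hypothesis (d) : finite dimensionality of W / V
  have h3 : FiniteDimensional ℂ (↥W ⧸ V) := by
    set Q := scaleSub r (algebraMap (Polynomial ℂ) (RatFunc ℂ) q)⁻¹ (polySubmodule r) with hQ
    have hqne : (algebraMap (Polynomial ℂ) (RatFunc ℂ) q) ≠ 0 := by
      intro h
      exact hq (IsFractionRing.injective (Polynomial ℂ) (RatFunc ℂ) (by rw [h, map_zero]))
    set V₂ : Submodule ℂ ↥Q := Submodule.comap Q.subtype pP with hV₂
    have hmemQ : ∀ g : Fin r → Polynomial ℂ,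
        ratScale r (algebraMap (Polynomial ℂ) (RatFunc ℂ) q)⁻¹ (polyToRat r g) ∈ Q :=
      fun g => ⟨polyToRat r g, ⟨g, rfl⟩, rfl⟩
    set θ : P →ₗ[ℂ] (↥Q ⧸ V₂) := V₂.mkQ ∘ₗ LinearMap.codRestrict Q
      (ratScale r (algebraMap (Polynomial ℂ) (RatFunc ℂ) q)⁻¹ ∘ₗ polyToRat r)
      (fun g => hmemQ g) with hθ
    have hθsurj : Function.Surjective θ := by
      intro z
      obtain ⟨y, rfl⟩ := Submodule.mkQ_surjective V₂ z
      obtain ⟨x, hxQ⟩ := y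
      obtain ⟨w, ⟨g, rfl⟩, rfl⟩ := hxQ
      exact ⟨g, by rfl⟩
    have hkerθ : LinearMap.range (polyScale r (p * q)) ≤ LinearMap.ker θ := by
      rintro x ⟨h, rfl⟩
      have hval : (ratScale r (algebraMap (Polynomial ℂ) (RatFunc ℂ) q)⁻¹)
          (polyToRat r (polyScale r (p * q) h)) = polyToRat r (fun k => p * h k) := by
        funext k
        rw [ratScale_apply, polyToRat_apply, polyToRat_apply, polyScale_apply]
        rw [map_mul, map_mul]
        field_simp
        ring
        rw [map_mul]
      simp only [hθ, LinearMap.mem_ker, LinearMap.comp_apply, Submodule.mkQ_apply,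
        Submodule.Quotient.mk_eq_zero, hV₂, Submodule.mem_comap]
      show (ratScale r (algebraMap (Polynomial ℂ) (RatFunc ℂ) q)⁻¹)
          (polyToRat r (polyScale r (p * q) h)) ∈ pP
      rw [hval]
      exact (hmem_pP _).mpr ⟨h, rfl⟩
    set θ' := Submodule.liftQ (LinearMap.range (polyScale r (p * q))) θ hkerθ with hθ'
    have hθ'surj : Function.Surjective θ' := by
      intro z
      obtain ⟨x, hx⟩ := hθsurj z
      exact ⟨Submodule.Quotient.mk x, hx⟩
    haveI := (quot_polyScale r (p * q) (mul_ne_zero hp hq)).1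
    haveI : FiniteDimensional ℂ (↥Q ⧸ V₂) := Module.Finite.of_surjective θ' hθ'surj
    set χ : ↥W →ₗ[ℂ] (↥Q ⧸ V₂) := V₂.mkQ ∘ₗ Submodule.inclusion hWq with hχ
    have hkχ : LinearMap.ker χ = V := by
      ext x
      simp only [hχ, LinearMap.mem_ker, LinearMap.comp_apply, Submodule.mkQ_apply,
        Submodule.Quotient.mk_eq_zero, hV₂, Submodule.mem_comap, hV]
      rfl
    rw [← hkχ]
    exact Module.Finite.equiv χ.quotKerEquivRange.symm
  -- apply the abstract index lemma and transfer the conclusions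
  obtain ⟨fd1, fd2, heq⟩ := index_lemma_aux S V h1 h2 h3
  have hkerS : Submodule.comap W.subtype (W ⊓ LinearMap.ker piPlus) = LinearMap.ker S := by
    rw [Submodule.comap_inf, Submodule.comap_subtype_self, top_inf_eq, hS, LinearMap.ker_comp]
  have eK2 : ↥(LinearMap.ker S) ≃ₗ[ℂ] ↥(W ⊓ LinearMap.ker piPlus) :=
    (LinearEquiv.ofEq _ _ hkerS.symm).trans
      (Submodule.comapSubtypeEquivOfLe (inf_le_left : W ⊓ LinearMap.ker piPlus ≤ W))
  have hrangeS : LinearMap.range S = Submodule.map piPlus W := by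
    rw [hS, LinearMap.range_comp, Submodule.range_subtype]
  have hd : Module.finrank ℂ (P ⧸ Submodule.map S V) = r * p.natDegree := by
    rw [hSV]
    exact (quot_polyScale r p hp).2
  have hfr1 : Module.finrank ℂ ↥(W ⊓ LinearMap.ker piPlus)
      = Module.finrank ℂ ↥(LinearMap.ker S) := eK2.symm.finrank_eq
  refine ⟨haveI := fd1; Module.Finite.equiv eK2, ?_, ?_⟩
  · rw [← hrangeS]
    exact fd2
  · rw [hfr1, ← hrangeS, heq, hd]
    push_cast
    ring
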